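/- The function D(p) = W·log₂(1+pγ) − (W·ς/((p + 1/γ)·ln 2))·(p/ς + p_c) − c is strictly increasing in p on [0, ∞), satisfies D(0) = −W·ς·γ·p_c/ln2 − c < 0 when c ≥ 0, and tends to +∞ as p → ∞; hence it has a unique zero in (0, ∞). -/

import Mathlib

noncomputable def Dfun (W γ ς pc c p : ℝ) : ℝ :=
  W * Real.logb 2 (1 + p * γ) - (W * ς / ((p + 1 / γ) * Real.log 2)) * (p / ς + pc) - c

/-- `D` is strictly increasing on `[0, ∞)`, negative at `0`, tends to `+∞`,
and hence has a unique zero in `(0, ∞)`. -/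
theorem Dfun_props (W γ ς pc c : ℝ) (hW : 0 < W) (hγ : 0 < γ)
    (hς : 0 < ς) (hς1 : ς ≤ 1) (hpc : 0 < pc) (hc : 0 ≤ c) :
    StrictMonoOn (Dfun W γ ς pc c) (Set.Ici 0) ∧
    Dfun W γ ς pc c 0 = -(W * ς * γ * pc / Real.log 2) - c ∧
    Dfun W γ ς pc c 0 < 0 ∧
    Filter.Tendsto (Dfun W γ ς pc c) Filter.atTop Filter.atTop ∧
    (∃! p : ℝ, 0 < p ∧ Dfun W γ ς pc c p = 0) := by
  have hL : 0 < Real.log 2 := Real.log_pos one_lt_two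
  have hden : ∀ p : ℝ, 0 ≤ p → 0 < p + 1 / γ := fun p hp => by positivity
  have hnum : ∀ p : ℝ, 0 ≤ p → 0 < 1 + p * γ := fun p hp => by positivity
  set f : ℝ → ℝ := fun p =>
    W / Real.log 2 * (Real.log (1 + p * γ) - (p + ς * pc) / (p + 1 / γ)) - c with hf
  have hrw : ∀ p : ℝ, 0 ≤ p → Dfun W γ ς pc c p = f p := by
    intro p hp
    have h1 := (hden p hp).ne'
    have h2 := hς.ne'
    have h3 := hL.ne'
    simp only [Dfun, Real.logb, hf]
    field_simp
  have hderiv : ∀ p : ℝ, 0 ≤ p →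
      HasDerivAt f (W / Real.log 2 * ((p + ς * pc) / (p + 1 / γ) ^ 2)) p := by
    intro p hp
    have hd := hden p hp
    have hn := hnum p hp
    have h1 : HasDerivAt (fun p : ℝ => 1 + p * γ) γ p := by
      simpa using ((hasDerivAt_id p).mul_const γ).const_add 1
    have hlog : HasDerivAt (fun p : ℝ => Real.log (1 + p * γ)) (γ / (1 + p * γ)) p :=
      h1.log hn.ne'
    have hnumd : HasDerivAt (fun p : ℝ => p + ς * pc) 1 p := (hasDerivAt_id p).add_const _
    have hdend : HasDerivAt (fun p : ℝ => p + 1 / γ) 1 p := (hasDerivAt_id p).add_const _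
    have hq : HasDerivAt (fun p : ℝ => (p + ς * pc) / (p + 1 / γ))
        ((1 * (p + 1 / γ) - (p + ς * pc) * 1) / (p + 1 / γ) ^ 2) p :=
      hnumd.div hdend hd.ne'
    have h := ((hlog.sub hq).const_mul (W / Real.log 2)).sub_const c
    refine h.congr_deriv ?_
    have hγ' := hγ.ne'
    have hn' := hn.ne'
    have hd' := hd.ne'
    field_simp
    ring
  have hcontf : ContinuousOn f (Set.Ici 0) := fun x hx =>
    (hderiv x hx).continuousAt.continuousWithinAt
  have smf : StrictMonoOn f (Set.Ici 0) := by
    apply strictMonoOn_of_deriv_pos (convex_Ici 0) hcontf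
    intro x hx
    rw [interior_Ici] at hx
    have hx' : (0:ℝ) < x := hx
    rw [(hderiv x hx'.le).deriv]
    have hd := hden x hx'.le
    have hn2 : 0 < x + ς * pc := by positivity
    exact mul_pos (by positivity) (div_pos hn2 (by positivity))
  have hmono : StrictMonoOn (Dfun W γ ς pc c) (Set.Ici 0) := by
    intro a ha b hb hab
    rw [hrw a ha, hrw b hb]
    exact smf ha hb hab
  have h0 : Dfun W γ ς pc c 0 = -(W * ς * γ * pc / Real.log 2) - c := by
    have h1 := hγ.ne'
    have h2 := hς.ne'
    have h3 := hL.ne'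
    simp only [Dfun, zero_mul, add_zero, Real.logb_one, mul_zero, zero_add, zero_div]
    field_simp
    ring
  have hneg : Dfun W γ ς pc c 0 < 0 := by
    rw [h0]
    have : 0 < W * ς * γ * pc / Real.log 2 := by positivity
    linarith
  have htend : Filter.Tendsto (Dfun W γ ς pc c) Filter.atTop Filter.atTop := by
    have h1 : Filter.Tendsto (fun p : ℝ =>
        W / Real.log 2 * Real.log (1 + p * γ)
          - (W / Real.log 2 * (1 + ς * pc * γ) + c)) Filter.atTop Filter.atTop := by
      apply Filter.tendsto_atTop_add_const_right
      apply Filter.Tendsto.const_mul_atTop (by positivity : (0:ℝ) < W / Real.log 2)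
      apply Real.tendsto_log_atTop.comp
      apply Filter.tendsto_atTop_add_const_left
      exact Filter.Tendsto.atTop_mul_const hγ Filter.tendsto_id
    refine Filter.tendsto_atTop_mono' _ ?_ h1
    filter_upwards [Filter.eventually_ge_atTop (0:ℝ)] with p hp
    rw [hrw p hp]
    have hd := hden p hp
    have hb : (p + ς * pc) / (p + 1 / γ) ≤ 1 + ς * pc * γ := by
      rw [div_le_iff₀ hd]
      have h1γ : 0 < 1 / γ := by positivity
      have key : (1 + ς * pc * γ) * (p + 1 / γ) = p + 1 / γ + ς * pc * γ * p + ς * pc := by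
        field_simp
        ring
      have h2 : 0 ≤ ς * pc * γ * p :=
        mul_nonneg (mul_nonneg (mul_nonneg hς.le hpc.le) hγ.le) hp
      linarith
    have hWL : 0 ≤ W / Real.log 2 := by positivity
    simp only [hf]
    nlinarith [mul_le_mul_of_nonneg_left hb hWL]
  refine ⟨hmono, h0, hneg, htend, ?_⟩
  obtain ⟨b, hb1, hb0⟩ :=
    ((htend.eventually_gt_atTop 0).and (Filter.eventually_ge_atTop 0)).exists
  have hcont : ContinuousOn (Dfun W γ ς pc c) (Set.Icc 0 b) :=
    (hcontf.mono (Set.Icc_subset_Ici_self)).congr fun x hx => hrw x hx.1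
  obtain ⟨p, hp, hpz⟩ := intermediate_value_Ioo hb0 hcont ⟨hneg, hb1⟩
  refine ⟨p, ⟨hp.1, hpz⟩, ?_⟩
  rintro q ⟨hq, hqz⟩
  exact hmono.injOn (Set.mem_Ici.2 hq.le) (Set.mem_Ici.2 hp.1.le) (by rw [hqz, hpz])
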